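/- Let (G,X*) be a contracting self-similar action with tile T and measure μ on the limit G-space J_G. Every point of J_G is covered by at least μ(T) translated tiles T·g. The set of points covered by exactly μ(T) tiles is open and dense in J_G, and its complement has μ-measure zero. -/

import Mathlib

open MeasureTheory ENNReal

/-- A self-similar action of the group `G` over the alphabet `X`, given by the action
`g(xw) = (toFun g x) ((res g x) w)` on words: `toFun g` is the action on the first letter and
`res g x = g|_x` is the restriction. -/
structure SSA (G X : Type*) [Group G] where
  toFun : G → X → X
  res : G → X → G
  toFun_one : ∀ x, toFun 1 x = x
  res_one : ∀ x, res 1 x = 1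
  toFun_mul : ∀ g h x, toFun (g * h) x = toFun g (toFun h x)
  res_mul : ∀ g h x, res (g * h) x = res g (toFun h x) * res h x

namespace SSA

variable {G X : Type*} [Group G]

/-- Restriction of `g` along a finite word (head of the list = first letter read):
`g|_{x₁x₂…xₙ} = g|_{x₁}|_{x₂}…|_{xₙ}`. -/
def resW (S : SSA G X) : G → List X → G
  | g, [] => g
  | g, x :: v => S.resW (S.res g x) v

/-- Action of `g` on a finite word (head of the list = first letter read):
`g(xw) = g(x) (g|_x)(w)`. -/
def actW (S : SSA G X) : G → List X → List X
  | _, [] => []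
  | g, x :: v => S.toFun g x :: S.actW (S.res g x) v

/-- `N` is the nucleus of the (contracting) action: it is closed under restrictions, every
element restricts into `N` on all sufficiently long words, and it is the smallest such set. -/
def IsNucleus (S : SSA G X) (N : Finset G) : Prop :=
  (∀ g ∈ N, ∀ x : X, S.res g x ∈ N) ∧
  (∀ g : G, ∃ k : ℕ, ∀ v : List X, k ≤ v.length → S.resW g v ∈ N) ∧
  ∀ N' : Finset G, (∀ g : G, ∃ k : ℕ, ∀ v : List X, k ≤ v.length → S.resW g v ∈ N') → N ⊆ N'

/-- There is a left-infinite path in the Moore diagram of the nucleus `N` which ends at the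
vertex `h` and whose `i`-th edge is labeled `(w i, w' i)` (sequences are left-infinite,
index `0` being the rightmost letter): the vertices `q i ∈ N` satisfy
`q (i+1)|_{w i} = q i` and `q (i+1) (w i) = w' i`, with `q 0 = h`. -/
def MoorePath (S : SSA G X) (N : Finset G) (w w' : ℕ → X) (h : G) : Prop :=
  ∃ q : ℕ → G, q 0 = h ∧ (∀ i, q i ∈ N) ∧
    ∀ i : ℕ, S.res (q (i + 1)) (w i) = q i ∧ S.toFun (q (i + 1)) (w i) = w' i

/-- The asymptotic equivalence relation on `X^{-ω} × G`: `w·g ~ w'·g'` iff there is a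
left-infinite path in the Moore diagram of the nucleus labeled `(w, w')` ending at `g'g⁻¹`. -/
def AsympEquiv (S : SSA G X) (N : Finset G) (p q : (ℕ → X) × G) : Prop :=
  S.MoorePath N p.1 q.1 (q.2 * p.2⁻¹)

/-- The limit `G`-space: the quotient of `X^{-ω} × G` by the asymptotic equivalence relation. -/
def LimitGSpace (S : SSA G X) (N : Finset G) : Type _ :=
  Quot (S.AsympEquiv N)

/-- The tile `𝒯_v ⊂ J_G` for a finite word `v` (encoded as a list whose head is the rightmost
letter): the image in the limit `G`-space of `X^{-ω}v × {1}`.  For `v = []` this is the tile `𝒯`,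
the image of `X^{-ω} × {1}`. -/
def Tile (S : SSA G X) (N : Finset G) (v : List X) : Set (S.LimitGSpace N) :=
  Quot.mk (S.AsympEquiv N) ''
    {p : (ℕ → X) × G | p.2 = 1 ∧ ∀ (i : ℕ) (h : i < v.length), p.1 i = v.get ⟨i, h⟩}

/-- The translated tile `𝒯·g`: the image in the limit `G`-space of `X^{-ω} × {g}`. -/
def TileT (S : SSA G X) (N : Finset G) (g : G) : Set (S.LimitGSpace N) :=
  Quot.mk (S.AsympEquiv N) '' {p : (ℕ → X) × G | p.2 = g}

variable [MeasurableSpace X] [MeasurableSpace G]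

instance (S : SSA G X) (N : Finset G) : MeasurableSpace (S.LimitGSpace N) :=
  inferInstanceAs (MeasurableSpace (Quot (S.AsympEquiv N)))

/-- The measure `μ` on the limit `G`-space: the push-forward under the quotient map of the
product of the (uniform Bernoulli) measure `μ0` on `X^{-ω}` and the counting measure on `G`. -/
noncomputable def limitMeasure (S : SSA G X) (N : Finset G) (μ0 : Measure (ℕ → X)) :
    Measure (S.LimitGSpace N) :=
  Measure.map (Quot.mk (S.AsympEquiv N)) (μ0.prod Measure.count)

end SSA

/-- The cylinder subset of `X^{-ω}` of sequences whose last `u.length` letters spell `u`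
(head of `u` = rightmost letter). -/
def Cyl {X : Type*} (u : List X) : Set (ℕ → X) :=
  {w | ∀ (i : ℕ) (h : i < u.length), w i = u.get ⟨i, h⟩}

instance {G X : Type*} [Group G] [TopologicalSpace X] [TopologicalSpace G]
    (S : SSA G X) (N : Finset G) : TopologicalSpace (S.LimitGSpace N) :=
  inferInstanceAs (TopologicalSpace (Quot (S.AsympEquiv N)))


noncomputable section SSAAux
open scoped Classical Pointwise

namespace SSA

variable {G X : Type*} [Group G]

section Alg
variable (S : SSA G X)

lemma toFun_inv (g : G) (x : X) : S.toFun g⁻¹ (S.toFun g x) = x := by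
  rw [← S.toFun_mul, inv_mul_cancel, S.toFun_one]

lemma res_inv (g : G) (x : X) : S.res g⁻¹ (S.toFun g x) = (S.res g x)⁻¹ := by
  have h := S.res_mul g⁻¹ g x
  rw [inv_mul_cancel, S.res_one] at h
  exact eq_inv_of_mul_eq_one_left h.symm

@[simp] lemma resW_nil (g : G) : S.resW g [] = g := rfl
@[simp] lemma resW_cons (g : G) (x : X) (v : List X) :
    S.resW g (x :: v) = S.resW (S.res g x) v := rfl
@[simp] lemma actW_nil (g : G) : S.actW g [] = [] := rfl
@[simp] lemma actW_cons (g : G) (x : X) (v : List X) :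
    S.actW g (x :: v) = S.toFun g x :: S.actW (S.res g x) v := rfl

lemma resW_append (g : G) (u v : List X) :
    S.resW g (u ++ v) = S.resW (S.resW g u) v := by
  induction u generalizing g with
  | nil => rfl
  | cons x u ih => simp [ih]

lemma resW_one (v : List X) : S.resW 1 v = 1 := by
  induction v with
  | nil => rfl
  | cons x v ih => simp [S.res_one, ih]

lemma actW_length (g : G) (v : List X) : (S.actW g v).length = v.length := by
  induction v generalizing g with
  | nil => rfl
  | cons x v ih => simp [ih]

lemma resW_mul (g h : G) (v : List X) :
    S.resW (g * h) v = S.resW g (S.actW h v) * S.resW h v := by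
  induction v generalizing g h with
  | nil => rfl
  | cons x v ih => simp [S.res_mul, ih]

lemma resW_inv (g : G) (v : List X) :
    (S.resW g v)⁻¹ = S.resW g⁻¹ (S.actW g v) := by
  have h := S.resW_mul g⁻¹ g v
  rw [inv_mul_cancel, S.resW_one] at h
  exact (eq_inv_of_mul_eq_one_left h.symm).symm

lemma actW_inv_actW (g : G) (v : List X) : S.actW g⁻¹ (S.actW g v) = v := by
  induction v generalizing g with
  | nil => rfl
  | cons x v ih => simp [S.toFun_inv, S.res_inv, ih]

end Alg

section Nuc
variable {S : SSA G X} {N : Finset G}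

lemma resW_mem (hN : S.IsNucleus N) {g : G} (hg : g ∈ N) (v : List X) :
    S.resW g v ∈ N := by
  induction v generalizing g with
  | nil => exact hg
  | cons x v ih => exact ih (hN.1 g hg x)

lemma one_mem_nuc (hN : S.IsNucleus N) [Nonempty X] : (1 : G) ∈ N := by
  obtain ⟨k, hk⟩ := hN.2.1 1
  have := hk (List.replicate k (Classical.arbitrary X)) (by simp)
  rwa [S.resW_one] at this

lemma inv_mem_nuc (hN : S.IsNucleus N) {g : G} (hg : g ∈ N) : g⁻¹ ∈ N := by
  have hsub : N ⊆ N.image (·⁻¹) := by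
    refine hN.2.2 _ (fun g => ?_)
    obtain ⟨k, hk⟩ := hN.2.1 g⁻¹
    refine ⟨k, fun v hv => Finset.mem_image.2
      ⟨S.resW g⁻¹ (S.actW g v), hk _ (by rw [S.actW_length]; exact hv), ?_⟩⟩
    rw [← S.resW_inv, inv_inv]
  obtain ⟨h, hh, he⟩ := Finset.mem_image.1 (hsub hg)
  rw [← he, inv_inv]; exact hh

end Nuc

end SSA

/-- The word `[w (a+n-1), …, w (a+1), w a]` (read left-to-right: furthest letter first). -/
def seg {X : Type*} (w : ℕ → X) (a : ℕ) : ℕ → List X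
  | 0 => []
  | n + 1 => w (a + n) :: seg w a n

section Seg
variable {X : Type*}

@[simp] lemma seg_zero (w : ℕ → X) (a : ℕ) : seg w a 0 = [] := rfl
@[simp] lemma seg_succ (w : ℕ → X) (a n : ℕ) :
    seg w a (n + 1) = w (a + n) :: seg w a n := rfl

@[simp] lemma seg_length (w : ℕ → X) (a n : ℕ) : (seg w a n).length = n := by
  induction n with
  | zero => rfl
  | succ n ih => simp [ih]

lemma seg_split (w : ℕ → X) (a n m : ℕ) :
    seg w a (n + m) = seg w (a + n) m ++ seg w a n := by
  induction m with
  | zero => rfl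
  | succ m ih =>
    show seg w a ((n + m) + 1) = _
    rw [seg_succ, ih]
    simp [Nat.add_assoc]

lemma seg_congr {w w' : ℕ → X} {a n : ℕ}
    (h : ∀ i, a ≤ i → i < a + n → w i = w' i) : seg w a n = seg w' a n := by
  induction n with
  | zero => rfl
  | succ n ih =>
    rw [seg_succ, seg_succ, h (a + n) (Nat.le_add_right _ _) (by omega),
      ih (fun i h1 h2 => h i h1 (by omega))]

lemma seg_shift (w : ℕ → X) (a n : ℕ) :
    seg (fun i => w (a + i)) 0 n = seg w a n := by
  induction n with
  | zero => rfl
  | succ n ih => simp [ih]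

lemma seg_inj {w w' : ℕ → X} {n : ℕ} (h : seg w 0 n = seg w' 0 n) :
    ∀ i, i < n → w i = w' i := by
  induction n with
  | zero => omega
  | succ n ih =>
    intro i hi
    rw [seg_succ, seg_succ] at h
    rcases Nat.lt_succ_iff_lt_or_eq.1 hi with h' | h'
    · exact ih (List.tail_eq_of_cons_eq h) i h'
    · subst h'
      simpa using List.head_eq_of_cons_eq h

lemma exists_seg_eq {X : Type*} [Nonempty X] (v : List X) :
    ∃ w : ℕ → X, seg w 0 v.length = v := by
  induction v with
  | nil => exact ⟨fun _ => Classical.arbitrary X, rfl⟩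
  | cons x t ih =>
    obtain ⟨w0, hw0⟩ := ih
    refine ⟨fun i => if i = t.length then x else w0 i, ?_⟩
    show seg _ 0 (t.length + 1) = _
    rw [seg_succ]
    have : seg (fun i => if i = t.length then x else w0 i) 0 t.length
        = seg w0 0 t.length := seg_congr (fun i _ h2 => by
          simp only [Nat.zero_add] at h2
          simp [Nat.ne_of_lt h2])
    simp [this, hw0]

end Seg

namespace SSA

variable {G X : Type*} [Group G]

/-- There is an infinite backward path in the Moore diagram of `N` reading `w` and ending
at `h` (no condition on output labels). -/
def pathTo (S : SSA G X) (N : Finset G) (w : ℕ → X) (h : G) : Prop :=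
  ∃ q : ℕ → G, q 0 = h ∧ (∀ i, q i ∈ N) ∧ ∀ i, S.res (q (i + 1)) (w i) = q i

/-- All states reachable from `N` by reading the finite word `v`. -/
def readSet (S : SSA G X) (N : Finset G) (v : List X) : Finset G :=
  N.image (fun h => S.resW h v)

/-- The set of endpoints of infinite backward paths reading `w`. -/
def Vfin (S : SSA G X) (N : Finset G) (w : ℕ → X) : Finset G :=
  N.filter (fun h => S.pathTo N w h)

/-- The minimal covering number. -/
def mNum (S : SSA G X) (N : Finset G) : ℕ :=
  sInf {n | ∃ w : ℕ → X, (S.Vfin N w).card = n}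

section Paths

variable {S : SSA G X} {N : Finset G}

lemma path_resW {w : ℕ → X} {q : ℕ → G} (hq : ∀ i, S.res (q (i + 1)) (w i) = q i)
    (a n : ℕ) : S.resW (q (a + n)) (seg w a n) = q a := by
  induction n with
  | zero => rfl
  | succ n ih =>
    show S.resW (q ((a + n) + 1)) (w (a + n) :: seg w a n) = q a
    rw [resW_cons, hq (a + n), ih]

lemma mem_readSet {v : List X} {h : G} :
    h ∈ S.readSet N v ↔ ∃ g ∈ N, S.resW g v = h := Finset.mem_image

lemma readSet_subset (hN : S.IsNucleus N) (v : List X) : S.readSet N v ⊆ N := by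
  intro h hm
  obtain ⟨g, hg, he⟩ := mem_readSet.1 hm
  exact he ▸ resW_mem hN hg v

lemma readSet_append (u v : List X) :
    S.readSet N (u ++ v) = (S.readSet N u).image (fun h => S.resW h v) := by
  simp [readSet, Finset.image_image, Function.comp_def, resW_append]

lemma readSet_prefix_subset (hN : S.IsNucleus N) (u v : List X) :
    S.readSet N (u ++ v) ⊆ S.readSet N v := by
  rw [readSet_append]
  intro h hm
  obtain ⟨g, hg, he⟩ := Finset.mem_image.1 hm
  exact mem_readSet.2 ⟨g, readSet_subset hN u hg, he⟩

lemma mem_Vfin {w : ℕ → X} {h : G} : h ∈ S.Vfin N w ↔ S.pathTo N w h := by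
  refine ⟨fun hm => (Finset.mem_filter.1 hm).2, fun hp => Finset.mem_filter.2 ⟨?_, hp⟩⟩
  obtain ⟨q, h0, hmem, _⟩ := hp
  exact h0 ▸ hmem 0

lemma Vfin_subset_readSet {w : ℕ → X} (n : ℕ) :
    S.Vfin N w ⊆ S.readSet N (seg w 0 n) := by
  intro h hm
  obtain ⟨q, h0, hmem, hres⟩ := mem_Vfin.1 hm
  refine mem_readSet.2 ⟨q n, hmem n, ?_⟩
  have := path_resW hres 0 n
  rw [Nat.zero_add] at this
  rw [this, h0]

lemma readSet_seg_antitone (hN : S.IsNucleus N) {w : ℕ → X} {a b : ℕ} (hab : a ≤ b) :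
    S.readSet N (seg w 0 b) ⊆ S.readSet N (seg w 0 a) := by
  have : seg w 0 b = seg w a (b - a) ++ seg w 0 a := by
    have := seg_split w 0 a (b - a)
    rw [show a + (b - a) = b from by omega] at this
    simpa using this
  rw [this]
  exact readSet_prefix_subset hN _ _

lemma koenig (hN : S.IsNucleus N) {w : ℕ → X} {h : G}
    (H : ∀ n, ∃ g' ∈ N, S.resW g' (seg w 0 n) = h) : S.pathTo N w h := by
  set Good : ℕ → G → Prop := fun n g => ∀ m, ∃ g' ∈ N, S.resW g' (seg w n m) = g with hGood
  have good_mem : ∀ n g, Good n g → g ∈ N := by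
    intro n g hg
    obtain ⟨g', hg', he⟩ := hg 0
    rw [seg_zero, resW_nil] at he
    exact he ▸ hg'
  have step : ∀ n g, Good n g → ∃ g₁, Good (n + 1) g₁ ∧ S.res g₁ (w n) = g := by
    intro n g hg
    have hc : ∀ m, ∃ c, (∃ g' ∈ N, S.resW g' (seg w (n + 1) m) = c) ∧ S.res c (w n) = g := by
      intro m
      obtain ⟨g', hg', he⟩ := hg (1 + m)
      rw [seg_split w n 1 m, resW_append] at he
      refine ⟨S.resW g' (seg w (n + 1) m), ⟨g', hg', rfl⟩, ?_⟩
      simpa using he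
    choose c hc1 hc2 using hc
    have hcN : ∀ m, c m ∈ N := by
      intro m
      obtain ⟨g', hg', he⟩ := hc1 m
      exact he ▸ resW_mem hN hg' _
    have pig : ∃ g₁, ∀ m', ∃ m, m' ≤ m ∧ c m = g₁ := by
      by_contra hcon
      push_neg at hcon
      choose M hM using hcon
      exact hM (c (N.sup M)) (N.sup M) (Finset.le_sup (hcN (N.sup M))) rfl
    obtain ⟨g₁, hg₁⟩ := pig
    refine ⟨g₁, ?_, ?_⟩
    · intro m'
      obtain ⟨m, hm, hcm⟩ := hg₁ m'
      obtain ⟨g', hg', he⟩ := hc1 m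
      have hsplit := seg_split w (n + 1) m' (m - m')
      rw [show m' + (m - m') = m from by omega] at hsplit
      rw [hsplit, resW_append] at he
      exact ⟨_, resW_mem hN hg' _, he.trans hcm⟩
    · obtain ⟨m, _, hcm⟩ := hg₁ 0
      rw [← hcm]; exact hc2 m
  have h0 : Good 0 h := H
  let T : ℕ → Type _ := fun n => {g : G // Good n g}
  let next : ∀ n, T n → T (n + 1) := fun n p =>
    ⟨(step n p.1 p.2).choose, ((step n p.1 p.2).choose_spec).1⟩
  let Q : ∀ n, T n := fun n => Nat.rec ⟨h, h0⟩ next n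
  refine ⟨fun n => (Q n).1, rfl, fun n => good_mem n _ (Q n).2, fun n => ?_⟩
  show S.res (Q (n + 1)).1 (w n) = (Q n).1
  exact ((step n (Q n).1 (Q n).2).choose_spec).2

lemma koenig_mem (hN : S.IsNucleus N) {w : ℕ → X} {h : G}
    (H : ∀ n, h ∈ S.readSet N (seg w 0 n)) : h ∈ S.Vfin N w :=
  mem_Vfin.2 (koenig hN (fun n => mem_readSet.1 (H n)))

lemma exists_readSet_eq_Vfin (hN : S.IsNucleus N) (w : ℕ → X) :
    ∃ n, S.readSet N (seg w 0 n) = S.Vfin N w := by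
  have hne : {m | ∃ n, (S.readSet N (seg w 0 n)).card = m}.Nonempty :=
    ⟨_, 0, rfl⟩
  obtain ⟨n₀, hn₀⟩ := Nat.sInf_mem hne
  refine ⟨n₀, Finset.Subset.antisymm ?_ (Vfin_subset_readSet n₀)⟩
  intro h hm
  refine koenig_mem hN (fun n => ?_)
  rcases le_or_gt n n₀ with hle | hlt
  · exact readSet_seg_antitone hN hle hm
  · have hsub := readSet_seg_antitone (w := w) hN hlt.le
    have heq : S.readSet N (seg w 0 n) = S.readSet N (seg w 0 n₀) :=
      Finset.eq_of_subset_of_card_le hsub (by rw [hn₀]; exact Nat.sInf_le ⟨n, rfl⟩)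
    rw [heq]; exact hm

lemma mNum_le [Nonempty X] (w : ℕ → X) : S.mNum N ≤ (S.Vfin N w).card :=
  Nat.sInf_le ⟨w, rfl⟩

lemma exists_mNum [Nonempty X] : ∃ w : ℕ → X, (S.Vfin N w).card = S.mNum N := by
  have hne : {n | ∃ w : ℕ → X, (S.Vfin N w).card = n}.Nonempty :=
    ⟨_, ⟨(fun _ => Classical.arbitrary X), rfl⟩⟩
  exact Nat.sInf_mem hne

lemma mNum_le_card_readSet (hN : S.IsNucleus N) [Nonempty X] (v : List X) :
    S.mNum N ≤ (S.readSet N v).card := by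
  obtain ⟨w, hw⟩ := exists_seg_eq v
  calc S.mNum N ≤ (S.Vfin N w).card := mNum_le w
    _ ≤ (S.readSet N (seg w 0 v.length)).card :=
        Finset.card_le_card (Vfin_subset_readSet _)
    _ = (S.readSet N v).card := by rw [hw]

lemma exists_vstar (hN : S.IsNucleus N) [Nonempty X] :
    ∃ (ℓ : ℕ) (wst : ℕ → X), 1 ≤ ℓ ∧ (S.readSet N (seg wst 0 ℓ)).card = S.mNum N := by
  obtain ⟨wst, hwst⟩ := exists_mNum (S := S) (N := N)
  obtain ⟨n₀, hn₀⟩ := exists_readSet_eq_Vfin hN wst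
  refine ⟨max n₀ 1, wst, le_max_right _ _, ?_⟩
  have h1 : S.readSet N (seg wst 0 (max n₀ 1)) ⊆ S.Vfin N wst :=
    hn₀ ▸ readSet_seg_antitone hN (le_max_left _ _)
  rw [Finset.Subset.antisymm h1 (Vfin_subset_readSet _), hwst]

lemma card_Vfin_le_of_match (hN : S.IsNucleus N) {w wst : ℕ → X} {ℓ j : ℕ}
    (hm : seg w (j * ℓ) ℓ = seg wst 0 ℓ) :
    (S.Vfin N w).card ≤ (S.readSet N (seg wst 0 ℓ)).card := by
  have hsplit : seg w 0 (j * ℓ + ℓ) = seg wst 0 ℓ ++ seg w 0 (j * ℓ) := by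
    have := seg_split w 0 (j * ℓ) ℓ
    simpa [hm] using this
  calc (S.Vfin N w).card ≤ (S.readSet N (seg w 0 (j * ℓ + ℓ))).card :=
        Finset.card_le_card (Vfin_subset_readSet _)
    _ ≤ (S.readSet N (seg wst 0 ℓ)).card := by
        rw [hsplit, readSet_append]; exact Finset.card_image_le

end Paths

end SSA

namespace SSA

variable {G X : Type*} [Group G]

section Equiv

variable {S : SSA G X} {N : Finset G}

lemma moorePath_of_pathTo {w : ℕ → X} {h : G} (hp : S.pathTo N w h) :
    ∃ w', S.MoorePath N w w' h := by
  obtain ⟨q, h0, hmem, hres⟩ := hp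
  exact ⟨fun i => S.toFun (q (i + 1)) (w i), q, h0, hmem, fun i => ⟨hres i, rfl⟩⟩

lemma bounded_path_mem (hN : S.IsNucleus N) {w : ℕ → X} {q : ℕ → G} (K : Finset G)
    (hK : ∀ i, q i ∈ K) (hres : ∀ i, S.res (q (i + 1)) (w i) = q i) : ∀ i, q i ∈ N := by
  choose k hk using hN.2.1
  intro i
  have := path_resW hres i (K.sup k)
  rw [← this]
  exact hk _ _ (by rw [seg_length]; exact Finset.le_sup (hK (i + K.sup k)))

lemma asympEquiv_equivalence (hN : S.IsNucleus N) [Nonempty X] :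
    Equivalence (S.AsympEquiv N) := by
  constructor
  · intro p
    exact ⟨fun _ => 1, (mul_inv_cancel p.2).symm, fun _ => one_mem_nuc hN,
      fun i => ⟨S.res_one _, S.toFun_one _⟩⟩
  · intro p q hpq
    obtain ⟨r, h0, hmem, hlab⟩ := hpq
    refine ⟨fun i => (r i)⁻¹, by show (r 0)⁻¹ = _; rw [h0, mul_inv_rev, inv_inv],
      fun i => inv_mem_nuc hN (hmem i), fun i => ⟨?_, ?_⟩⟩
    · rw [← (hlab i).2, S.res_inv, (hlab i).1]
    · rw [← (hlab i).2, S.toFun_inv]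
  · intro a b c hab hbc
    obtain ⟨r, hr0, hrmem, hrlab⟩ := hab
    obtain ⟨s, hs0, hsmem, hslab⟩ := hbc
    refine ⟨fun i => s i * r i, by show s 0 * r 0 = _; rw [hr0, hs0]; group, ?_,
      fun i => ⟨?_, ?_⟩⟩
    · refine bounded_path_mem (w := a.1) hN (N * N)
        (fun i => Finset.mul_mem_mul (hsmem i) (hrmem i)) (fun i => ?_)
      rw [S.res_mul, (hrlab i).2, (hslab i).1, (hrlab i).1]
    · rw [S.res_mul, (hrlab i).2, (hslab i).1, (hrlab i).1]
    · rw [S.toFun_mul, (hrlab i).2, (hslab i).2]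

lemma mk_eq_mk (hN : S.IsNucleus N) [Nonempty X] {p q : (ℕ → X) × G} :
    Quot.mk (S.AsympEquiv N) p = Quot.mk (S.AsympEquiv N) q ↔ S.AsympEquiv N p q := by
  rw [Quot.eq]
  exact Equivalence.eqvGen_iff (asympEquiv_equivalence hN)

lemma mem_TileT (hN : S.IsNucleus N) [Nonempty X] {w : ℕ → X} {g g' : G} :
    (Quot.mk (S.AsympEquiv N) (w, g) : S.LimitGSpace N) ∈ S.TileT N g'
      ↔ g' * g⁻¹ ∈ S.Vfin N w := by
  constructor
  · rintro ⟨p', hp'2, hmk⟩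
    have heq := (asympEquiv_equivalence hN).symm ((mk_eq_mk hN).1 hmk)
    obtain ⟨q, h0, hmem, hlab⟩ := heq
    refine mem_Vfin.2 ⟨q, ?_, hmem, fun i => (hlab i).1⟩
    rw [h0, hp'2]
  · intro hv
    obtain ⟨w', hw'⟩ := moorePath_of_pathTo (mem_Vfin.1 hv)
    refine ⟨(w', g'), rfl, ?_⟩
    exact (mk_eq_mk hN).2 ((asympEquiv_equivalence hN).symm hw')

lemma cover_encard (hN : S.IsNucleus N) [Nonempty X] (w : ℕ → X) (g : G) :
    {g' : G | (Quot.mk (S.AsympEquiv N) (w, g) : S.LimitGSpace N) ∈ S.TileT N g'}.encard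
      = ((S.Vfin N w).card : ℕ∞) := by
  have hset : {g' : G | (Quot.mk (S.AsympEquiv N) (w, g) : S.LimitGSpace N) ∈ S.TileT N g'}
      = (fun h => h * g) '' ↑(S.Vfin N w) := by
    ext g'
    simp only [Set.mem_setOf_eq, mem_TileT hN, Set.mem_image, Finset.mem_coe]
    constructor
    · intro H; exact ⟨g' * g⁻¹, H, by group⟩
    · rintro ⟨h, hh, rfl⟩; simpa using hh
  rw [hset, Set.InjOn.encard_image (fun a _ b _ hab => mul_right_cancel hab),
    Set.encard_coe_eq_coe_finsetCard]

lemma Tile_nil : S.Tile N [] = S.TileT N 1 := by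
  rw [Tile, TileT]
  congr 1
  ext p
  simp

lemma preimage_tile (hN : S.IsNucleus N) [Nonempty X] :
    (Quot.mk (S.AsympEquiv N)) ⁻¹' (S.Tile N [])
      = {p : (ℕ → X) × G | p.2⁻¹ ∈ S.Vfin N p.1} := by
  rw [Tile_nil]
  ext ⟨w, g⟩
  simp only [Set.mem_preimage, Set.mem_setOf_eq]
  rw [show ((w, g) : (ℕ → X) × G).2⁻¹ = g⁻¹ from rfl]
  show (Quot.mk (S.AsympEquiv N) (w, g) : S.LimitGSpace N) ∈ S.TileT N 1 ↔ g⁻¹ ∈ S.Vfin N w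
  rw [mem_TileT hN, one_mul]

lemma preimage_cover (hN : S.IsNucleus N) [Nonempty X] (c : ℕ∞) :
    (Quot.mk (S.AsympEquiv N)) ⁻¹'
        {x : S.LimitGSpace N | {g' : G | x ∈ S.TileT N g'}.encard = c}
      = {p : (ℕ → X) × G | ((S.Vfin N p.1).card : ℕ∞) = c} := by
  ext ⟨w, g⟩
  show {g' : G | (Quot.mk (S.AsympEquiv N) (w, g) : S.LimitGSpace N) ∈ S.TileT N g'}.encard = c
      ↔ ((S.Vfin N w).card : ℕ∞) = c
  rw [cover_encard hN]

end Equiv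

end SSA

section PrefixSets

variable {X : Type*} [Fintype X] [MeasurableSpace X]

/-- The set of sequences whose prefix of length `n` lies in `Q`. -/
def preSet (n : ℕ) (Q : Finset (Fin n → X)) : Set (ℕ → X) :=
  {w | (fun i : Fin n => w ↑i) ∈ Q}

lemma measurableSet_pi_singleton (hX : ∀ x : X, MeasurableSet ({x} : Set X))
    {n : ℕ} (f : Fin n → X) : MeasurableSet ({f} : Set (Fin n → X)) := by
  have : ({f} : Set (Fin n → X)) = ⋂ i, (fun g : Fin n → X => g i) ⁻¹' {f i} := by
    ext g; simp [funext_iff]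
  rw [this]
  exact MeasurableSet.iInter fun i => measurable_pi_apply i (hX (f i))

lemma measurable_restrict (n : ℕ) :
    Measurable (fun (w : ℕ → X) (i : Fin n) => w ↑i) :=
  measurable_pi_lambda _ fun _ => measurable_pi_apply _

lemma preSet_measurable (hX : ∀ x : X, MeasurableSet ({x} : Set X))
    (n : ℕ) (Q : Finset (Fin n → X)) : MeasurableSet (preSet n Q) := by
  haveI : MeasurableSingletonClass (Fin n → X) := ⟨measurableSet_pi_singleton hX⟩
  exact measurable_restrict n ((Q : Set (Fin n → X)).toFinite.measurableSet)

lemma preSet_isOpen [TopologicalSpace X] [DiscreteTopology X]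
    (n : ℕ) (Q : Finset (Fin n → X)) : IsOpen (preSet n Q) := by
  haveI : DiscreteTopology (Fin n → X) := Pi.discreteTopology
  have hc : Continuous (fun (w : ℕ → X) (i : Fin n) => w ↑i) :=
    continuous_pi fun _ => continuous_apply _
  exact (isOpen_discrete (Q : Set (Fin n → X))).preimage hc

lemma preSet_singleton_eq_cyl {n : ℕ} (f : Fin n → X) :
    preSet n {f} = Cyl (List.ofFn f) := by
  ext w
  simp only [preSet, Set.mem_setOf_eq, Finset.mem_singleton, Cyl, List.length_ofFn]
  constructor
  · intro h i hi
    rw [List.get_ofFn]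
    exact congrFun h (Fin.cast (List.length_ofFn (f := f)) ⟨i, by simpa using hi⟩)
  · intro h
    funext i
    have := h i.1 (by simpa using i.2)
    rw [List.get_ofFn] at this
    simpa using this

lemma measure_preSet (μ0 : Measure (ℕ → X))
    (hμ0 : ∀ u : List X, μ0 (Cyl u) = ((Fintype.card X : ℝ≥0∞))⁻¹ ^ u.length)
    (hX : ∀ x : X, MeasurableSet ({x} : Set X))
    (n : ℕ) (Q : Finset (Fin n → X)) :
    μ0 (preSet n Q) = Q.card * ((Fintype.card X : ℝ≥0∞))⁻¹ ^ n := by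
  have hU : preSet n Q = ⋃ f ∈ Q, preSet n {f} := by
    ext w
    simp [preSet]
  rw [hU, measure_biUnion_finset ?_ (fun f _ => preSet_measurable hX n {f})]
  · have : ∀ f ∈ Q, μ0 (preSet n {f}) = ((Fintype.card X : ℝ≥0∞))⁻¹ ^ n := by
      intro f _
      rw [preSet_singleton_eq_cyl, hμ0, List.length_ofFn]
    rw [Finset.sum_congr rfl this, Finset.sum_const, nsmul_eq_mul]
  · intro f _ f' _ hne
    simp only [Function.onFun, Set.disjoint_left]
    intro w hw hw'
    simp only [preSet, Set.mem_setOf_eq, Finset.mem_singleton] at hw hw'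
    exact hne (hw ▸ hw')

variable [Nonempty X]

/-- Extension of a finite word to an infinite sequence. -/
def extSeq (n : ℕ) (f : Fin n → X) : ℕ → X :=
  fun i => if h : i < n then f ⟨i, h⟩ else Classical.arbitrary X

lemma extSeq_agree {n : ℕ} (w : ℕ → X) :
    ∀ i, i < n → extSeq n (fun j : Fin n => w ↑j) i = w i := by
  intro i hi
  simp [extSeq, hi]

lemma prefix_determined {n : ℕ} (Φ : (ℕ → X) → Prop)
    (h : ∀ w w' : ℕ → X, (∀ i, i < n → w i = w' i) → Φ w → Φ w') :
    {w | Φ w} = preSet n (Finset.univ.filter (fun f : Fin n → X => Φ (extSeq n f))) := by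
  ext w
  simp only [Set.mem_setOf_eq, preSet, Finset.mem_filter, Finset.mem_univ, true_and]
  constructor
  · intro hw
    exact h w _ (fun i hi => (extSeq_agree w i hi).symm) hw
  · intro hw
    exact h _ w (extSeq_agree w) hw

lemma prefix_determined' {n : ℕ} (Φ : (ℕ → X) → Prop)
    (h : ∀ w w' : ℕ → X, (∀ i, i < n → w i = w' i) → Φ w → Φ w') :
    ∃ Q : Finset (Fin n → X), {w | Φ w} = preSet n Q ∧ ∀ f, f ∈ Q ↔ Φ (extSeq n f) := by
  refine ⟨_, prefix_determined Φ h, fun f => ?_⟩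
  rw [Finset.mem_filter]
  simp

end PrefixSets

section Sing

variable {X : Type*} [Fintype X] [MeasurableSpace X]

lemma cyl_nil : Cyl ([] : List X) = Set.univ := by
  ext w; simp [Cyl]

lemma cyl_single (z : X) : Cyl [z] = {w : ℕ → X | w 0 = z} := by
  ext w
  simp only [Cyl, List.length_singleton, Set.mem_setOf_eq]
  constructor
  · intro h; exact h 0 (by norm_num)
  · intro h i hi
    match i, hi with
    | 0, _ => exact h

lemma frac_lt_one {n : ℕ} (hn : 1 ≤ n) :
    ((n - 1 : ℕ) : ℝ≥0∞) * (↑n)⁻¹ < 1 := by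
  have h0 : (n : ℝ≥0∞) ≠ 0 := Nat.cast_ne_zero.2 (by omega)
  have ht : (n : ℝ≥0∞) ≠ ⊤ := natCast_ne_top n
  calc ((n - 1 : ℕ) : ℝ≥0∞) * (↑n)⁻¹ < ↑n * (↑n)⁻¹ := by
        refine ENNReal.mul_lt_mul_left (ENNReal.inv_ne_zero.2 ht) (ENNReal.inv_ne_top.2 h0) ?_
        exact_mod_cast Nat.sub_lt (by omega) one_pos
    _ = 1 := ENNReal.mul_inv_cancel h0 ht

lemma sing_of_cyl (μ0 : Measure (ℕ → X))
    (hμ0 : ∀ u : List X, μ0 (Cyl u) = ((Fintype.card X : ℝ≥0∞))⁻¹ ^ u.length)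
    (x : X) : MeasurableSet ({x} : Set X) := by
  by_contra hx
  -- find `y ≠ x` measurably indistinguishable from `x`
  set 𝒜 : Set (Set X) := {B | MeasurableSet B ∧ x ∈ B} with h𝒜
  have hatom_meas : MeasurableSet (⋂₀ 𝒜) :=
    MeasurableSet.sInter (Set.to_countable _) (fun B hB => hB.1)
  have hx_atom : x ∈ ⋂₀ 𝒜 := Set.mem_sInter.2 fun B hB => hB.2
  have hne : ⋂₀ 𝒜 ≠ {x} := fun h => hx (h ▸ hatom_meas)
  have hnsub : ¬ ⋂₀ 𝒜 ⊆ {x} := fun hsub =>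
    hne (Set.Subset.antisymm hsub (by simpa using hx_atom))
  obtain ⟨y, hy_atom, hyx'⟩ := Set.not_subset.1 hnsub
  have hyx : y ≠ x := by simpa using hyx'
  have key : ∀ B : Set X, MeasurableSet B → (x ∈ B ↔ y ∈ B) := by
    intro B hB
    constructor
    · intro hxB
      exact Set.sInter_subset_of_mem (show B ∈ 𝒜 from ⟨hB, hxB⟩) hy_atom
    · intro hyB
      by_contra hxB
      exact (Set.sInter_subset_of_mem (show Bᶜ ∈ 𝒜 from ⟨hB.compl, hxB⟩) hy_atom) hyB
  classical
  set σ : X ≃ X := Equiv.swap x y with hσ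
  have hσE : ∀ E : Set X, MeasurableSet E → σ ⁻¹' E = E := by
    intro E hE
    ext z
    simp only [Set.mem_preimage]
    by_cases hzx : z = x
    · subst hzx
      rw [hσ, Equiv.swap_apply_left]
      exact (key E hE).symm
    · by_cases hzy : z = y
      · subst hzy
        rw [hσ, Equiv.swap_apply_right]
        exact key E hE
      · rw [hσ, Equiv.swap_apply_of_ne_of_ne hzx hzy]
  set s : (ℕ → X) → ℕ → X := fun w => Function.update w 0 (σ (w 0)) with hs
  -- every measurable set of sequences is `s`-invariant
  have hinv : ∀ B : Set (ℕ → X), MeasurableSet B → s ⁻¹' B = B := by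
    set m' : MeasurableSpace (ℕ → X) :=
      { MeasurableSet' := fun B => MeasurableSet B ∧ s ⁻¹' B = B
        measurableSet_empty := ⟨MeasurableSet.empty, rfl⟩
        measurableSet_compl := fun B hB =>
          ⟨hB.1.compl, by rw [Set.preimage_compl, hB.2]⟩
        measurableSet_iUnion := fun f hf =>
          ⟨MeasurableSet.iUnion fun i => (hf i).1, by
            rw [Set.preimage_iUnion]
            exact Set.iUnion_congr fun i => (hf i).2⟩ } with hm'
    have hle : (MeasurableSpace.pi : MeasurableSpace (ℕ → X)) ≤ m' := by
      refine iSup_le fun i => ?_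
      rw [MeasurableSpace.le_def]
      rintro B hB
      obtain ⟨E, hE, rfl⟩ := MeasurableSpace.measurableSet_comap.1 hB
      refine ⟨measurable_pi_apply i hE, ?_⟩
      ext w
      simp only [Set.mem_preimage]
      rcases Nat.eq_zero_or_pos i with hi | hi
      · subst hi
        rw [show s w 0 = σ (w 0) from Function.update_self 0 _ w]
        constructor
        · intro h; rwa [← hσE E hE]
        · intro h; rw [show σ (w 0) ∈ E ↔ w 0 ∈ σ ⁻¹' E from Iff.rfl, hσE E hE]; exact h
      · rw [show s w i = w i from Function.update_of_ne (by omega) _ w]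
    intro B hB
    exact (hle B hB).2
  -- any measurable superset of `Cyl [x]` contains `Cyl [y]`
  have hxy : ∀ B : Set (ℕ → X), MeasurableSet B → Cyl [x] ⊆ B → Cyl [y] ⊆ B := by
    intro B hB hsub w hw
    have hw0 : w 0 = y := (cyl_single y ▸ hw : w ∈ {w : ℕ → X | w 0 = y})
    have hsw : s w ∈ Cyl [x] := by
      rw [cyl_single]
      show s w 0 = x
      rw [show s w 0 = σ (w 0) from Function.update_self 0 _ w, hw0, hσ,
        Equiv.swap_apply_right]
    have : w ∈ s ⁻¹' B := hsub hsw
    rwa [hinv B hB] at this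
  have hxy_le : μ0 (Cyl [x] ∪ Cyl [y]) ≤ μ0 (Cyl [x]) := by
    rw [measure_eq_iInf (Cyl [x])]
    exact le_iInf fun B => le_iInf fun hsub => le_iInf fun hBm =>
      measure_mono (Set.union_subset hsub (hxy B hBm hsub))
  set c := Fintype.card X with hc
  have hc2 : 2 ≤ c := Fintype.one_lt_card_iff_nontrivial.2 ⟨y, x, hyx⟩
  set F : Finset X := (Finset.univ.erase x).erase y with hF
  have hcov : (Set.univ : Set (ℕ → X)) ⊆ (Cyl [x] ∪ Cyl [y]) ∪ ⋃ z ∈ F, Cyl [z] := by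
    intro w _
    by_cases h1 : w 0 = x
    · exact Or.inl (Or.inl (by rw [cyl_single]; exact h1))
    · by_cases h2 : w 0 = y
      · exact Or.inl (Or.inr (by rw [cyl_single]; exact h2))
      · exact Or.inr (Set.mem_biUnion
          (Finset.mem_erase.2 ⟨h2, Finset.mem_erase.2 ⟨h1, Finset.mem_univ _⟩⟩)
          (by rw [cyl_single]; exact rfl))
  have huniv : μ0 (Set.univ : Set (ℕ → X)) = 1 := by
    rw [← cyl_nil, hμ0]; simp
  have hFcard : F.card = c - 2 := by
    rw [hF, Finset.card_erase_of_mem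
      (Finset.mem_erase.2 ⟨hyx, Finset.mem_univ _⟩),
      Finset.card_erase_of_mem (Finset.mem_univ _), Finset.card_univ, ← hc]
    omega
  have hbound : (1 : ℝ≥0∞) ≤ ((c - 1 : ℕ) : ℝ≥0∞) * (↑c)⁻¹ := by
    calc (1 : ℝ≥0∞) = μ0 Set.univ := huniv.symm
      _ ≤ μ0 ((Cyl [x] ∪ Cyl [y]) ∪ ⋃ z ∈ F, Cyl [z]) := measure_mono hcov
      _ ≤ μ0 (Cyl [x] ∪ Cyl [y]) + μ0 (⋃ z ∈ F, Cyl [z]) := measure_union_le _ _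
      _ ≤ μ0 (Cyl [x]) + ∑ z ∈ F, μ0 (Cyl [z]) :=
          add_le_add hxy_le (measure_biUnion_finset_le F _)
      _ = (↑c)⁻¹ + ((c - 2 : ℕ) : ℝ≥0∞) * (↑c)⁻¹ := by
          have h1 : μ0 (Cyl [x]) = (↑c)⁻¹ := by rw [hμ0]; simp
          have h2 : ∑ z ∈ F, μ0 (Cyl [z]) = (F.card : ℝ≥0∞) * (↑c)⁻¹ := by
            have hzz : ∀ z ∈ F, μ0 (Cyl [z]) = (↑c)⁻¹ := fun z _ => by rw [hμ0]; simp
            rw [Finset.sum_congr rfl hzz, Finset.sum_const, nsmul_eq_mul]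
          rw [h1, h2, hFcard]
      _ = (((c - 2 : ℕ) : ℝ≥0∞) + 1) * (↑c)⁻¹ := by ring
      _ = ((c - 1 : ℕ) : ℝ≥0∞) * (↑c)⁻¹ := by
          have hcast : ((c - 2 : ℕ) : ℝ≥0∞) + 1 = ((c - 1 : ℕ) : ℝ≥0∞) := by
            rw [show ((c - 2 : ℕ) : ℝ≥0∞) + 1 = ((c - 2 + 1 : ℕ) : ℝ≥0∞) from by
              push_cast; ring]
            congr 1
            omega
          rw [hcast]
  exact absurd hbound (not_le.2 (frac_lt_one (by omega)))

end Sing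

end SSAAux
/-- Every point of the limit `G`-space is covered by at least `μ(𝒯)` translated tiles `𝒯·g`;
the set of points covered by exactly `μ(𝒯)` tiles is open and dense, and its complement
has measure zero. -/
theorem stmt_14 {G X : Type*} [Group G] [Fintype X] [Nonempty X]
    [TopologicalSpace X] [DiscreteTopology X] [TopologicalSpace G] [DiscreteTopology G]
    [MeasurableSpace X] [MeasurableSpace G] [MeasurableSingletonClass G] [Countable G]
    (S : SSA G X) (N : Finset G) (hN : S.IsNucleus N)
    (μ0 : Measure (ℕ → X))
    (hμ0 : ∀ u : List X, μ0 (Cyl u) = ((Fintype.card X : ℝ≥0∞))⁻¹ ^ u.length)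
    (k : ℕ) (hk : S.limitMeasure N μ0 (S.Tile N []) = k) :
    (∀ x : S.LimitGSpace N, (k : ℕ∞) ≤ {g : G | x ∈ S.TileT N g}.encard) ∧
    IsOpen {x : S.LimitGSpace N | {g : G | x ∈ S.TileT N g}.encard = (k : ℕ∞)} ∧
    Dense {x : S.LimitGSpace N | {g : G | x ∈ S.TileT N g}.encard = (k : ℕ∞)} ∧
    S.limitMeasure N μ0 {x : S.LimitGSpace N | {g : G | x ∈ S.TileT N g}.encard = (k : ℕ∞)}ᶜ
      = 0 := by
    classical
  have hX : ∀ x : X, MeasurableSet ({x} : Set X) := sing_of_cyl μ0 hμ0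
  haveI hsf : SigmaFinite (Measure.count : Measure G) := by
    refine Measure.sigmaFinite_of_countable (S := Set.range fun g : G => {g})
      (Set.countable_range _) ?_ ?_
    · rintro s ⟨g, rfl⟩; simp [Measure.count_singleton]
    · ext g; simp
  have hq_meas : Measurable (Quot.mk (S.AsympEquiv N)
      : (ℕ → X) × G → S.LimitGSpace N) := measurable_quot_mk
  -- endpoint sets of infinite paths
  have hSset_eq : ∀ h : G, {w : ℕ → X | S.pathTo N w h}
      = ⋂ n, {w | h ∈ S.readSet N (seg w 0 n)} := by
    intro h
    ext w
    simp only [Set.mem_setOf_eq, Set.mem_iInter]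
    constructor
    · intro hp n
      obtain ⟨qq, h0, hmem, hres⟩ := hp
      refine SSA.mem_readSet.2 ⟨qq n, hmem n, ?_⟩
      have := SSA.path_resW hres 0 n
      rw [Nat.zero_add] at this
      rw [this, h0]
    · intro hall
      exact SSA.koenig hN (fun n => SSA.mem_readSet.1 (hall n))
  have hdet : ∀ (n : ℕ) (P : List X → Prop),
      ∃ Q : Finset (Fin n → X), {w : ℕ → X | P (seg w 0 n)} = preSet n Q := by
    intro n P
    refine ⟨_, prefix_determined (fun w => P (seg w 0 n)) ?_⟩
    intro w w' hag hw
    rwa [seg_congr (w := w) (w' := w') (fun i _ h2 => hag i (by omega))] at hw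
  have hSmeas : ∀ h : G, MeasurableSet {w : ℕ → X | S.pathTo N w h} := by
    intro h
    rw [hSset_eq h]
    refine MeasurableSet.iInter fun n => ?_
    obtain ⟨Q, hQ⟩ := hdet n (fun v => h ∈ S.readSet N v)
    rw [hQ]
    exact preSet_measurable hX n Q
  -- the set of sequences with minimal covering number
  have hE_union : {w : ℕ → X | (S.Vfin N w).card = S.mNum N}
      = ⋃ n, {w : ℕ → X | (S.readSet N (seg w 0 n)).card = S.mNum N} := by
    ext w
    simp only [Set.mem_setOf_eq, Set.mem_iUnion]
    constructor
    · intro hw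
      obtain ⟨n, hn⟩ := SSA.exists_readSet_eq_Vfin hN w
      exact ⟨n, by rw [hn, hw]⟩
    · rintro ⟨n, hn⟩
      refine le_antisymm ?_ (SSA.mNum_le w)
      calc (S.Vfin N w).card ≤ (S.readSet N (seg w 0 n)).card :=
            Finset.card_le_card (SSA.Vfin_subset_readSet n)
        _ = S.mNum N := hn
  have hEmeas : MeasurableSet {w : ℕ → X | (S.Vfin N w).card = S.mNum N} := by
    rw [hE_union]
    refine MeasurableSet.iUnion fun n => ?_
    obtain ⟨Q, hQ⟩ := hdet n (fun v => (S.readSet N v).card = S.mNum N)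
    rw [hQ]; exact preSet_measurable hX n Q
  have hEopen : IsOpen {w : ℕ → X | (S.Vfin N w).card = S.mNum N} := by
    rw [hE_union]
    refine isOpen_iUnion fun n => ?_
    obtain ⟨Q, hQ⟩ := hdet n (fun v => (S.readSet N v).card = S.mNum N)
    rw [hQ]; exact preSet_isOpen n Q
  -- the collapsing word
  obtain ⟨ℓ, wst, hℓ, hvst⟩ := SSA.exists_vstar (S := S) (N := N) hN
  have hmatch : ∀ (w : ℕ → X) (j : ℕ), seg w (j * ℓ) ℓ = seg wst 0 ℓ →
      (S.Vfin N w).card = S.mNum N := by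
    intro w j hmj
    refine le_antisymm ?_ (SSA.mNum_le w)
    calc (S.Vfin N w).card ≤ (S.readSet N (seg wst 0 ℓ)).card :=
          SSA.card_Vfin_le_of_match hN hmj
      _ = S.mNum N := hvst
  -- the exceptional set is null
  have hEc : μ0 {w : ℕ → X | (S.Vfin N w).card = S.mNum N}ᶜ = 0 := by
    have hK1 : 1 ≤ Fintype.card X ^ ℓ := Nat.one_le_pow _ _ Fintype.card_pos
    have hr1 : ((Fintype.card X ^ ℓ - 1 : ℕ) : ℝ≥0∞)
        * ((Fintype.card X ^ ℓ : ℕ) : ℝ≥0∞)⁻¹ < 1 := frac_lt_one hK1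
    have hbound : ∀ J : ℕ, μ0 {w : ℕ → X | (S.Vfin N w).card = S.mNum N}ᶜ
        ≤ (((Fintype.card X ^ ℓ - 1 : ℕ) : ℝ≥0∞)
            * ((Fintype.card X ^ ℓ : ℕ) : ℝ≥0∞)⁻¹) ^ J := by
      intro J
      set Φ : (ℕ → X) → Prop :=
        fun w => ∀ j, j < J → seg w (j * ℓ) ℓ ≠ seg wst 0 ℓ with hΦ
      have hΦdet : ∀ w w' : ℕ → X, (∀ i, i < J * ℓ → w i = w' i) → Φ w → Φ w' := by
        intro w w' hag hw j hj
        have hmul : (j + 1) * ℓ ≤ J * ℓ := Nat.mul_le_mul_right ℓ hj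
        have hmul2 : (j + 1) * ℓ = j * ℓ + ℓ := by ring
        have hseg : seg w' (j * ℓ) ℓ = seg w (j * ℓ) ℓ :=
          seg_congr (fun i _ h2 => (hag i (by omega)).symm)
        rw [hseg]
        exact hw j hj
      obtain ⟨Q, hFJ, hQmem⟩ := prefix_determined' Φ hΦdet
      have hsub : {w : ℕ → X | (S.Vfin N w).card = S.mNum N}ᶜ ⊆ {w | Φ w} := by
        intro w hw
        simp only [Set.mem_compl_iff, Set.mem_setOf_eq] at hw
        intro j hj hcon
        exact hw (hmatch w j hcon)
      set B : Finset (Fin ℓ → X) := Finset.univ.filter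
        (fun g => ¬ (seg (extSeq ℓ g) 0 ℓ = seg wst 0 ℓ)) with hBdef
      have hBcard : B.card = Fintype.card X ^ ℓ - 1 := by
        have huniq : Finset.univ.filter
            (fun g : Fin ℓ → X => seg (extSeq ℓ g) 0 ℓ = seg wst 0 ℓ)
            = {fun t : Fin ℓ => wst ↑t} := by
          ext g
          simp only [Finset.mem_filter, Finset.mem_univ, true_and, Finset.mem_singleton]
          constructor
          · intro hg
            funext t
            have hagree := seg_inj hg t.1 (by simpa using t.2)
            rw [show extSeq ℓ g t.1 = g t from by simp [extSeq, t.2]] at hagree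
            exact hagree
          · rintro rfl
            refine seg_congr (fun i _ h2 => ?_)
            simp only [Nat.zero_add] at h2
            simp [extSeq, h2]
        have hadd := Finset.card_filter_add_card_filter_not
          (s := (Finset.univ : Finset (Fin ℓ → X)))
          (p := fun g : Fin ℓ → X => seg (extSeq ℓ g) 0 ℓ = seg wst 0 ℓ)
        rw [huniq, Finset.card_singleton, Finset.card_univ, Fintype.card_fun] at hadd
        have hcard : (Fintype.card X) ^ (Fintype.card (Fin ℓ)) = Fintype.card X ^ ℓ := by
          simp
        rw [hcard] at hadd
        have hBeq : (Finset.univ.filter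
            (fun g : Fin ℓ → X => ¬ (seg (extSeq ℓ g) 0 ℓ = seg wst 0 ℓ))).card
            = B.card := by rw [hBdef]
        omega
      have hQle : Q.card ≤ (Fintype.card X ^ ℓ - 1) ^ J := by
        have hidx : ∀ (j : Fin J) (t : Fin ℓ), (j : ℕ) * ℓ + ↑t < J * ℓ := by
          intro j t
          have hmul : ((j : ℕ) + 1) * ℓ ≤ J * ℓ := Nat.mul_le_mul_right ℓ j.2
          have hmul2 : ((j : ℕ) + 1) * ℓ = (j : ℕ) * ℓ + ℓ := by ring
          have := t.2
          omega
        set Φm : (Fin (J * ℓ) → X) → (Fin J → Fin ℓ → X) :=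
          fun f j t => f ⟨(j : ℕ) * ℓ + ↑t, hidx j t⟩ with hΦm
        have hmaps : ∀ f ∈ Q, Φm f ∈ Fintype.piFinset (fun _ : Fin J => B) := by
          intro f hf
          rw [Fintype.mem_piFinset]
          intro j
          rw [hBdef, Finset.mem_filter]
          refine ⟨Finset.mem_univ _, ?_⟩
          have hΦf := ((hQmem f).1 hf) j.1 j.2
          intro hcon
          apply hΦf
          have hseg1 : seg (extSeq ℓ (Φm f j)) 0 ℓ
              = seg (fun i => extSeq (J * ℓ) f ((j : ℕ) * ℓ + i)) 0 ℓ := by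
            refine seg_congr (fun i _ h2 => ?_)
            simp only [Nat.zero_add] at h2
            have hlt := hidx j ⟨i, h2⟩
            simp [extSeq, h2, hΦm, hlt]
          rw [hseg1, seg_shift] at hcon
          exact hcon
        have hinj : Set.InjOn Φm ↑Q := by
          intro f _ f' _ heq
          funext i
          have hl0 : 0 < ℓ := by omega
          have hjJ : (i : ℕ) / ℓ < J := (Nat.div_lt_iff_lt_mul hl0).2 i.2
          have htl : (i : ℕ) % ℓ < ℓ := Nat.mod_lt _ hl0
          have hcomp := congrFun (congrFun heq ⟨(i : ℕ) / ℓ, hjJ⟩) ⟨(i : ℕ) % ℓ, htl⟩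
          simp only [hΦm] at hcomp
          have hix : ((i : ℕ) / ℓ) * ℓ + (i : ℕ) % ℓ = (i : ℕ) := by
            rw [mul_comm]; exact Nat.div_add_mod _ _
          have hfin : (⟨((i : ℕ) / ℓ) * ℓ + (i : ℕ) % ℓ, hidx ⟨_, hjJ⟩ ⟨_, htl⟩⟩
              : Fin (J * ℓ)) = i := Fin.ext hix
          rwa [hfin] at hcomp
        calc Q.card
            ≤ (Fintype.piFinset (fun _ : Fin J => B)).card :=
              Finset.card_le_card_of_injOn Φm hmaps hinj
          _ = (Fintype.card X ^ ℓ - 1) ^ J := by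
              rw [Fintype.card_piFinset]
              simp [hBcard]
      calc μ0 {w : ℕ → X | (S.Vfin N w).card = S.mNum N}ᶜ
          ≤ μ0 {w | Φ w} := measure_mono hsub
        _ = Q.card * ((Fintype.card X : ℝ≥0∞))⁻¹ ^ (J * ℓ) := by
            rw [hFJ, measure_preSet μ0 hμ0 hX]
        _ ≤ (((Fintype.card X ^ ℓ - 1 : ℕ) : ℝ≥0∞) ^ J)
              * ((Fintype.card X : ℝ≥0∞))⁻¹ ^ (J * ℓ) := by
            gcongr
            exact_mod_cast hQle
        _ = (((Fintype.card X ^ ℓ - 1 : ℕ) : ℝ≥0∞)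
              * ((Fintype.card X ^ ℓ : ℕ) : ℝ≥0∞)⁻¹) ^ J := by
            rw [mul_pow]
            congr 1
            rw [mul_comm J ℓ, pow_mul, ← ENNReal.inv_pow]
            congr 2
            push_cast
            ring
    have htend := ENNReal.tendsto_pow_atTop_nhds_zero_of_lt_one hr1
    exact le_antisymm (ge_of_tendsto' htend hbound) zero_le
  -- the tile preimage and its measurability
  have hP_pre := SSA.preimage_tile (S := S) (N := N) hN
  have hP_eq : {p : (ℕ → X) × G | p.2⁻¹ ∈ S.Vfin N p.1}
      = ⋃ h ∈ N, ({w : ℕ → X | S.pathTo N w h} ×ˢ ({h⁻¹} : Set G)) := by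
    ext ⟨w, g⟩
    simp only [Set.mem_setOf_eq, Set.mem_iUnion, Set.mem_prod, Set.mem_singleton_iff]
    constructor
    · intro hg
      exact ⟨g⁻¹, (Finset.mem_filter.1 hg).1, SSA.mem_Vfin.1 hg, (inv_inv g).symm⟩
    · rintro ⟨h, hhN, hpath, rfl⟩
      rw [show (h⁻¹ : G)⁻¹ = h from inv_inv h]
      exact SSA.mem_Vfin.2 hpath
  have hPmeas : MeasurableSet {p : (ℕ → X) × G | p.2⁻¹ ∈ S.Vfin N p.1} := by
    rw [hP_eq]
    exact MeasurableSet.biUnion N.countable_toSet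
      (fun h _ => (hSmeas h).prod (measurableSet_singleton _))
  -- μ0 of the good set is 1
  have hμ0E : μ0 {w : ℕ → X | (S.Vfin N w).card = S.mNum N} = 1 := by
    have h1 : μ0 (Set.univ : Set (ℕ → X)) = 1 := by rw [← cyl_nil, hμ0]; simp
    refine le_antisymm (h1 ▸ measure_mono (Set.subset_univ _)) ?_
    calc (1 : ℝ≥0∞) = μ0 Set.univ := h1.symm
      _ ≤ μ0 {w : ℕ → X | (S.Vfin N w).card = S.mNum N}
          + μ0 {w : ℕ → X | (S.Vfin N w).card = S.mNum N}ᶜ := by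
          rw [← Set.union_compl_self {w : ℕ → X | (S.Vfin N w).card = S.mNum N}]
          exact measure_union_le _ _
      _ = μ0 {w : ℕ → X | (S.Vfin N w).card = S.mNum N} := by rw [hEc, add_zero]
  -- the measure of the tile preimage
  have hνP : (μ0.prod Measure.count) {p : (ℕ → X) × G | p.2⁻¹ ∈ S.Vfin N p.1}
      = (S.mNum N : ℝ≥0∞) := by
    set ν := μ0.prod (Measure.count : Measure G) with hν
    set 𝒜 : Finset (Finset G) := N.powerset.filter (fun A => A.card = S.mNum N) with h𝒜
    have hEAmeas : ∀ A : Finset G, MeasurableSet {w : ℕ → X | S.Vfin N w = A} := by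
      intro A
      have heq : {w : ℕ → X | S.Vfin N w = A}
          = (⋂ h ∈ A, {w : ℕ → X | S.pathTo N w h})
            ∩ (⋂ h ∈ N \ A, {w : ℕ → X | S.pathTo N w h}ᶜ) := by
        ext w
        simp only [Set.mem_setOf_eq, Set.mem_inter_iff, Set.mem_iInter,
          Set.mem_compl_iff, Finset.mem_sdiff]
        constructor
        · intro hw
          refine ⟨fun h hh => SSA.mem_Vfin.1 (hw ▸ hh), ?_⟩
          rintro h ⟨hhN, hhA⟩ hpath
          exact hhA (hw ▸ SSA.mem_Vfin.2 hpath)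
        · rintro ⟨h1, h2⟩
          refine Finset.ext fun h => ⟨fun hh => ?_, fun hh => SSA.mem_Vfin.2 (h1 h hh)⟩
          by_contra hhA
          exact h2 h ⟨(Finset.mem_filter.1 hh).1, hhA⟩ (SSA.mem_Vfin.1 hh)
      rw [heq]
      exact (MeasurableSet.biInter A.countable_toSet (fun h _ => hSmeas h)).inter
        (MeasurableSet.biInter (N \ A).countable_toSet (fun h _ => (hSmeas h).compl))
    have hEAdisj : ∀ A A' : Finset G, A ≠ A' →
        Disjoint {w : ℕ → X | S.Vfin N w = A} {w : ℕ → X | S.Vfin N w = A'} := by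
      intro A A' hne
      rw [Set.disjoint_left]
      intro w hw hw'
      have e1 : S.Vfin N w = A := hw
      have e2 : S.Vfin N w = A' := hw'
      exact hne (e1.symm.trans e2)
    have hP1 : {p : (ℕ → X) × G | p.2⁻¹ ∈ S.Vfin N p.1}
          ∩ ({w : ℕ → X | (S.Vfin N w).card = S.mNum N} ×ˢ (Set.univ : Set G))
        = ⋃ A ∈ 𝒜, ({w : ℕ → X | S.Vfin N w = A}
            ×ˢ (↑(A.image (·⁻¹)) : Set G)) := by
      ext ⟨w, g⟩
      simp only [Set.mem_inter_iff, Set.mem_setOf_eq, Set.mem_prod, Set.mem_univ,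
        and_true, Set.mem_iUnion, Finset.coe_image, Set.mem_image, Finset.mem_coe]
      constructor
      · rintro ⟨hgV, hwE⟩
        refine ⟨S.Vfin N w, ?_, rfl, g⁻¹, hgV, inv_inv g⟩
        rw [h𝒜, Finset.mem_filter, Finset.mem_powerset]
        exact ⟨Finset.filter_subset _ _, hwE⟩
      · rintro ⟨A, hA, hVA, a, haA, rfl⟩
        refine ⟨by rw [inv_inv, hVA]; exact haA, ?_⟩
        rw [hVA]
        exact (Finset.mem_filter.1 hA).2
    have hdisjP : (↑𝒜 : Set (Finset G)).PairwiseDisjoint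
        (fun A => {w : ℕ → X | S.Vfin N w = A} ×ˢ (↑(A.image (·⁻¹)) : Set G)) := by
      intro A _ A' _ hne
      simp only [Function.onFun]
      rw [Set.disjoint_left]
      rintro ⟨w, g⟩ h1 h2
      have e1 : S.Vfin N w = A := h1.1
      have e2 : S.Vfin N w = A' := h2.1
      exact hne (e1.symm.trans e2)
    have hterm : ∀ A ∈ 𝒜, ν ({w : ℕ → X | S.Vfin N w = A}
          ×ˢ (↑(A.image (·⁻¹)) : Set G))
        = μ0 {w : ℕ → X | S.Vfin N w = A} * (S.mNum N : ℝ≥0∞) := by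
      intro A hA
      rw [hν, Measure.prod_prod, Measure.count_apply_finset,
        Finset.card_image_of_injective _ inv_injective, (Finset.mem_filter.1 hA).2]
    have hEunion : ⋃ A ∈ 𝒜, {w : ℕ → X | S.Vfin N w = A}
        = {w : ℕ → X | (S.Vfin N w).card = S.mNum N} := by
      ext w
      simp only [Set.mem_iUnion, Set.mem_setOf_eq]
      constructor
      · rintro ⟨A, hA, hVA⟩
        rw [hVA]
        exact (Finset.mem_filter.1 hA).2
      · intro hw
        refine ⟨S.Vfin N w, ?_, rfl⟩
        rw [h𝒜, Finset.mem_filter, Finset.mem_powerset]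
        exact ⟨Finset.filter_subset _ _, hw⟩
    have hνP1 : ν ({p : (ℕ → X) × G | p.2⁻¹ ∈ S.Vfin N p.1}
          ∩ ({w : ℕ → X | (S.Vfin N w).card = S.mNum N} ×ˢ (Set.univ : Set G)))
        = (S.mNum N : ℝ≥0∞) := by
      rw [hP1, measure_biUnion_finset hdisjP
        (fun A _ => (hEAmeas A).prod (Finset.finite_toSet _).measurableSet),
        Finset.sum_congr rfl hterm, ← Finset.sum_mul]
      have hsum : ∑ A ∈ 𝒜, μ0 {w : ℕ → X | S.Vfin N w = A}
          = μ0 {w : ℕ → X | (S.Vfin N w).card = S.mNum N} := by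
        rw [← hEunion, measure_biUnion_finset ?_ (fun A _ => hEAmeas A)]
        intro A _ A' _ hne
        exact hEAdisj A A' hne
      rw [hsum, hμ0E, one_mul]
    have hν2 : ν ({p : (ℕ → X) × G | p.2⁻¹ ∈ S.Vfin N p.1}
          \ ({w : ℕ → X | (S.Vfin N w).card = S.mNum N} ×ˢ (Set.univ : Set G))) = 0 := by
      have hsub2 : {p : (ℕ → X) × G | p.2⁻¹ ∈ S.Vfin N p.1}
            \ ({w : ℕ → X | (S.Vfin N w).card = S.mNum N} ×ˢ (Set.univ : Set G))
          ⊆ {w : ℕ → X | (S.Vfin N w).card = S.mNum N}ᶜ ×ˢ (Set.univ : Set G) := by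
        rintro ⟨w, g⟩ ⟨-, hnot⟩
        refine ⟨fun hwE => hnot ⟨hwE, trivial⟩, trivial⟩
      refine le_antisymm ?_ zero_le
      calc ν _ ≤ ν ({w : ℕ → X | (S.Vfin N w).card = S.mNum N}ᶜ
            ×ˢ (Set.univ : Set G)) := measure_mono hsub2
        _ = 0 := by rw [hν, Measure.prod_prod, hEc, zero_mul]
    have hsplit := measure_inter_add_diff (μ := ν)
      {p : (ℕ → X) × G | p.2⁻¹ ∈ S.Vfin N p.1} (hEmeas.prod MeasurableSet.univ)
    rw [hνP1, hν2, add_zero] at hsplit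
    exact hsplit.symm
  -- the tile has measure `mNum`
  have hTmeas : MeasurableSet (S.Tile N []) := by
    have hmeas : MeasurableSet ((Quot.mk (S.AsympEquiv N)) ⁻¹' (S.Tile N [])) := by
      rw [hP_pre]; exact hPmeas
    exact hmeas
  have hμT : S.limitMeasure N μ0 (S.Tile N []) = (S.mNum N : ℝ≥0∞) := by
    show Measure.map (Quot.mk (S.AsympEquiv N)) (μ0.prod Measure.count) (S.Tile N [])
      = (S.mNum N : ℝ≥0∞)
    rw [Measure.map_apply hq_meas hTmeas, hP_pre, hνP]
  have hkm : k = S.mNum N := by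
    have hcast : ((k : ℕ) : ℝ≥0∞) = ((S.mNum N : ℕ) : ℝ≥0∞) := hk.symm.trans hμT
    exact_mod_cast hcast
  -- the preimage of the covering-number set
  have hpre : (Quot.mk (S.AsympEquiv N)) ⁻¹'
      {x : S.LimitGSpace N | {g' : G | x ∈ S.TileT N g'}.encard = (k : ℕ∞)}
      = Prod.fst ⁻¹' {w : ℕ → X | (S.Vfin N w).card = S.mNum N} := by
    rw [SSA.preimage_cover hN]
    ext ⟨w, g⟩
    simp only [Set.mem_setOf_eq, Set.mem_preimage]
    rw [hkm]
    exact ⟨fun hh => by exact_mod_cast hh, fun hh => by exact_mod_cast hh⟩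
  refine ⟨?_, ?_, ?_, ?_⟩
  · -- lower bound on the covering number
    intro x
    obtain ⟨⟨w, g⟩, rfl⟩ := Quot.exists_rep x
    erw [show {g' : G | (Quot.mk (S.AsympEquiv N) (w, g) : S.LimitGSpace N) ∈ S.TileT N g'}.encard
      = ((S.Vfin N w).card : ℕ∞) from SSA.cover_encard hN w g]
    have hle := SSA.mNum_le (S := S) (N := N) w
    rw [← hkm] at hle
    exact_mod_cast hle
  · -- openness
    erw [← (isQuotientMap_quot_mk).isOpen_preimage, hpre]
    exact hEopen.preimage continuous_fst
  · -- density
    rw [dense_iff_inter_open]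
    rintro U hU ⟨x₀, hx₀⟩
    obtain ⟨⟨w, g⟩, rfl⟩ := Quot.exists_rep x₀
    have hU' : IsOpen ((Quot.mk (S.AsympEquiv N)) ⁻¹' U) := hU.preimage continuous_quot_mk
    obtain ⟨u, v, hu, hv, hwu, hgv, huv⟩ := isOpen_prod_iff.1 hU' w g hx₀
    obtain ⟨I, t, hIt, hpi⟩ := isOpen_pi_iff.1 hu w hwu
    set j : ℕ := I.sup id + 1 with hj
    set w' : ℕ → X := fun i => if j * ℓ ≤ i ∧ i < j * ℓ + ℓ then wst (i - j * ℓ) else w i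
      with hw'def
    have hw'match : seg w' (j * ℓ) ℓ = seg wst 0 ℓ := by
      rw [← seg_shift w' (j * ℓ) ℓ]
      refine seg_congr (fun i _ h2 => ?_)
      simp only [Nat.zero_add] at h2
      simp only [hw'def]
      rw [if_pos ⟨Nat.le_add_right _ _, by omega⟩]
      congr 1
      omega
    have hw'E : (S.Vfin N w').card = S.mNum N := hmatch w' j hw'match
    have hw'u : w' ∈ u := by
      refine hpi ?_
      rw [Set.mem_pi]
      intro i hiI
      have hilt : i < j := Nat.lt_succ_of_le (Finset.le_sup (f := id) (Finset.mem_coe.1 hiI))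
      have hcond : ¬ (j * ℓ ≤ i ∧ i < j * ℓ + ℓ) := by
        rintro ⟨hc1, -⟩
        have hjl : j ≤ j * ℓ := Nat.le_mul_of_pos_right j (by omega)
        omega
      simp only [hw'def, if_neg hcond]
      exact (hIt i (Finset.mem_coe.1 hiI)).2
    refine ⟨Quot.mk (S.AsympEquiv N) (w', g), huv ⟨hw'u, hgv⟩, ?_⟩
    show {g' : G | Quot.mk (S.AsympEquiv N) (w', g) ∈ S.TileT N g'}.encard = (k : ℕ∞)
    rw [SSA.cover_encard hN, hw'E, hkm]
  · -- the complement is null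
    have hpre_c : (Quot.mk (S.AsympEquiv N)) ⁻¹'
        {x : S.LimitGSpace N | {g' : G | x ∈ S.TileT N g'}.encard = (k : ℕ∞)}ᶜ
        = {w : ℕ → X | (S.Vfin N w).card = S.mNum N}ᶜ ×ˢ (Set.univ : Set G) := by
      rw [Set.preimage_compl, hpre]
      ext ⟨w, g⟩
      simp [Set.mem_prod]
    have hWc_meas : MeasurableSet
        {x : S.LimitGSpace N | {g' : G | x ∈ S.TileT N g'}.encard = (k : ℕ∞)}ᶜ := by
      have hmeas : MeasurableSet ((Quot.mk (S.AsympEquiv N)) ⁻¹'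
          {x : S.LimitGSpace N | {g' : G | x ∈ S.TileT N g'}.encard = (k : ℕ∞)}ᶜ) := by
        rw [hpre_c]
        exact hEmeas.compl.prod MeasurableSet.univ
      exact hmeas
    show Measure.map (Quot.mk (S.AsympEquiv N)) (μ0.prod Measure.count) _ = 0
    rw [Measure.map_apply hq_meas hWc_meas]
    erw [hpre_c]
    rw [Measure.prod_prod, hEc, zero_mul]
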